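/- arXiv:2011.14359 — 2 statements merged into one kernel-verified Lean document; each statement's English description precedes it below -/
import Mathlib

section
/- Let V_{i,t} and W_{i,t} (1 ≤ i ≤ M, 0 ≤ t ≤ T) be square-integrable random variables such that variables with different first index i are independent, E[V_{i,t}] = V_t and E[W_{i,t}] = 0. For each i let the covariance matrix of the vector (V_{i,0},...,V_{i,T}, W_{i,0},...,W_{i,T}) be invertible with precision matrix having blocks H_{i,11}, H_{i,12}, H_{i,21}, H_{i,22}. Then, under the constraint Σ_i α_{i,t} = 1 for all t (with β unconstrained), the weights α_i* = H_{i,11}(Σ_{i'} H_{i',11})^{-1} e and β_i* = H_{i,21}(Σ_{i'} H_{i',11})^{-1} e minimize the variance of Σ_{i,t}(α_{i,t} V_{i,t} + β_{i,t} W_{i,t}). -/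
open MeasureTheory ProbabilityTheory Matrix

/-- Covariance of two real random variables. -/
noncomputable def cov {Ω : Type*} [MeasurableSpace Ω] (μ : Measure Ω) (X Y : Ω → ℝ) : ℝ :=
  ∫ ω, (X ω - ∫ x, X x ∂μ) * (Y ω - ∫ x, Y x ∂μ) ∂μ

section aux

variable {Ω : Type*} [MeasurableSpace Ω] {μ : Measure Ω}

lemma memL2_mul_integrable {f g : Ω → ℝ} (hf : MemLp f 2 μ) (hg : MemLp g 2 μ) :
    Integrable (fun ω => f ω * g ω) μ := by
  have h : Integrable (fun ω => (f ω ^ 2 + g ω ^ 2) / 2) μ :=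
    (hf.integrable_sq.add hg.integrable_sq).div_const 2
  refine h.mono' (hf.aestronglyMeasurable.mul hg.aestronglyMeasurable) ?_
  filter_upwards with ω
  rw [Real.norm_eq_abs, abs_mul]
  nlinarith [sq_abs (f ω), sq_abs (g ω), sq_nonneg (|f ω| - |g ω|)]

lemma cov_comm (X Y : Ω → ℝ) : cov μ X Y = cov μ Y X := by
  unfold cov
  congr 1
  funext ω
  ring

lemma cov_eq_zero_of_indepFun [IsProbabilityMeasure μ] {X Y : Ω → ℝ}
    (hX : MemLp X 2 μ) (hY : MemLp Y 2 μ) (h : IndepFun X Y μ) : cov μ X Y = 0 := by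
  have hXi : Integrable X μ := hX.integrable one_le_two
  have hYi : Integrable Y μ := hY.integrable one_le_two
  have h' : IndepFun (fun ω => X ω - ∫ x, X x ∂μ) (fun ω => Y ω - ∫ x, Y x ∂μ) μ :=
    h.comp (measurable_id.sub_const _) (measurable_id.sub_const _)
  rw [cov]
  have hm : ∫ ω, (X ω - ∫ x, X x ∂μ) * (Y ω - ∫ x, Y x ∂μ) ∂μ
      = (∫ ω, (X ω - ∫ x, X x ∂μ) ∂μ) * ∫ ω, (Y ω - ∫ x, Y x ∂μ) ∂μ :=
    h'.integral_fun_mul_eq_mul_integral (hXi.sub (integrable_const _)).aestronglyMeasurable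
      (hYi.sub (integrable_const _)).aestronglyMeasurable
  rw [hm, integral_sub hXi (integrable_const _), integral_const]
  simp

lemma variance_sum_mul [IsProbabilityMeasure μ] {ι : Type*} [Fintype ι]
    (Z : ι → Ω → ℝ) (hZ : ∀ p, MemLp (Z p) 2 μ) (c : ι → ℝ) :
    variance (fun ω => ∑ p, c p * Z p ω) μ
      = ∑ p, ∑ q, c p * c q * cov μ (Z p) (Z q) := by
  set m : ι → ℝ := fun p => ∫ ω, Z p ω ∂μ with hm
  have hZi : ∀ p, Integrable (Z p) μ := fun p => (hZ p).integrable one_le_two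
  have hcent : ∀ p, MemLp (fun ω => Z p ω - m p) 2 μ := fun p => (hZ p).sub (memLp_const _)
  have hS : MemLp (fun ω => ∑ p, c p * Z p ω) 2 μ := by
    have h := memLp_finset_sum' (μ := μ) Finset.univ (fun p _ => (hZ p).const_mul (c p))
    have heq : (fun ω => ∑ p, c p * Z p ω) = ∑ p : ι, (fun x => c p * Z p x) := by
      funext ω; simp [Finset.sum_apply]
    rw [heq]; exact h
  have hmean : (∫ ω, (∑ p, c p * Z p ω) ∂μ) = ∑ p, c p * m p := by
    rw [integral_finset_sum _ (fun p _ => (hZi p).const_mul (c p))]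
    simp_rw [integral_const_mul]
    rfl
  have key : ∀ ω, ((∑ p, c p * Z p ω) - ∑ p, c p * m p) ^ 2
      = ∑ p, ∑ q, c p * c q * ((Z p ω - m p) * (Z q ω - m q)) := by
    intro ω
    rw [← Finset.sum_sub_distrib]
    have : ∀ p, c p * Z p ω - c p * m p = c p * (Z p ω - m p) := fun p => by ring
    simp_rw [this, sq, Finset.sum_mul_sum]
    exact Finset.sum_congr rfl fun p _ => Finset.sum_congr rfl fun q _ => by ring
  rw [show variance (fun ω => ∑ p, c p * Z p ω) μ = ∫ ω, ((((fun ω => ∑ p, c p * Z p ω) - fun _ => ∫ ω, (∑ p, c p * Z p ω) ∂μ) ^ (2 : ℕ) : Ω → ℝ)) ω ∂μ from by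
    rw [variance_eq_integral hS.aestronglyMeasurable.aemeasurable]; rfl]
  have : ((fun ω => ∑ p, c p * Z p ω) - fun _ => ∫ ω, (∑ p, c p * Z p ω) ∂μ) ^ (2 : ℕ)
      = fun ω => ∑ p, ∑ q, c p * c q * ((Z p ω - m p) * (Z q ω - m q)) := by
    funext ω
    simp only [Pi.pow_apply, Pi.sub_apply, hmean]
    exact key ω
  rw [this, integral_finset_sum _ (fun p _ => integrable_finset_sum _ fun q _ =>
    ((memL2_mul_integrable (hcent p) (hcent q)).const_mul _))]
  refine Finset.sum_congr rfl fun p _ => ?_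
  rw [integral_finset_sum _ (fun q _ => (memL2_mul_integrable (hcent p) (hcent q)).const_mul _)]
  refine Finset.sum_congr rfl fun q _ => ?_
  rw [integral_const_mul]
  rfl

lemma dot_mulVec_symm {n : Type*} [Fintype n] {A : Matrix n n ℝ}
    (hA : ∀ a b, A a b = A b a) (x y : n → ℝ) :
    x ⬝ᵥ (A *ᵥ y) = y ⬝ᵥ (A *ᵥ x) := by
  simp only [dotProduct, mulVec, Finset.mul_sum]
  rw [Finset.sum_comm]
  exact Finset.sum_congr rfl fun a _ => Finset.sum_congr rfl fun b _ => by rw [hA b a]; ring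

lemma posDef_of_posSemidef_isUnit {n : Type*} [Fintype n] [DecidableEq n]
    {A : Matrix n n ℝ} (h1 : A.PosSemidef) (h2 : IsUnit A) : A.PosDef := by
  have h1' := posSemidef_iff_dotProduct_mulVec.mp h1
  rw [posDef_iff_dotProduct_mulVec]
  refine ⟨h1'.1, fun x hx => (h1'.2 x).lt_of_ne' fun h0 => hx ?_⟩
  have hAx : A *ᵥ x = 0 := (h1.dotProduct_mulVec_zero_iff x).mp h0
  have hinj := Matrix.mulVec_injective_iff_isUnit.mpr h2
  exact hinj (by simpa using hAx)

lemma toBlocks₁₁_posDef {n m : Type*} [Fintype n] [Fintype m]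
    {A : Matrix (n ⊕ m) (n ⊕ m) ℝ} (hA : A.PosDef) : A.toBlocks₁₁.PosDef := by
  rw [posDef_iff_dotProduct_mulVec]
  constructor
  · ext a b
    have := hA.1.apply (Sum.inl a) (Sum.inl b)
    simpa [Matrix.toBlocks₁₁, Matrix.conjTranspose_apply] using this
  · intro x hx
    have hx' : (Sum.elim x 0 : n ⊕ m → ℝ) ≠ 0 := by
      intro h
      apply hx
      funext a
      exact congrFun h (Sum.inl a)
    have := hA.dotProduct_mulVec_pos hx'
    simpa [dotProduct, Matrix.mulVec, Fintype.sum_sum_type, Matrix.toBlocks₁₁,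
      Finset.mul_sum] using this

lemma quad_min {n M' : Type*} [Fintype n] [Fintype M'] [Nonempty M']
    (Ci : M' → Matrix (n ⊕ n) (n ⊕ n) ℝ)
    (hsymm : ∀ i a b, Ci i a b = Ci i b a)
    (hpsd : ∀ i (y : n ⊕ n → ℝ), 0 ≤ y ⬝ᵥ (Ci i *ᵥ y))
    (xs x : M' → (n ⊕ n) → ℝ) (lam : n → ℝ)
    (hfix : ∀ i, Ci i *ᵥ xs i = Sum.elim lam 0)
    (hcons : ∀ a, ∑ i, (x i (Sum.inl a) - xs i (Sum.inl a)) = 0) :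
    ∑ i, xs i ⬝ᵥ (Ci i *ᵥ xs i) ≤ ∑ i, x i ⬝ᵥ (Ci i *ᵥ x i) := by
  have expand : ∀ i, x i ⬝ᵥ (Ci i *ᵥ x i)
      = xs i ⬝ᵥ (Ci i *ᵥ xs i) + (x i - xs i) ⬝ᵥ (Ci i *ᵥ (x i - xs i))
        + 2 * ((x i - xs i) ⬝ᵥ Sum.elim lam 0) := by
    intro i
    have hx : x i = xs i + (x i - xs i) := by ring
    calc x i ⬝ᵥ (Ci i *ᵥ x i)
        = (xs i + (x i - xs i)) ⬝ᵥ (Ci i *ᵥ (xs i + (x i - xs i))) := by rw [← hx]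
      _ = xs i ⬝ᵥ (Ci i *ᵥ xs i) + (x i - xs i) ⬝ᵥ (Ci i *ᵥ (x i - xs i))
          + 2 * ((x i - xs i) ⬝ᵥ (Ci i *ᵥ xs i)) := by
          rw [Matrix.mulVec_add, add_dotProduct, dotProduct_add, dotProduct_add,
            dot_mulVec_symm (hsymm i) (xs i) (x i - xs i)]
          ring
      _ = _ := by rw [hfix i]
  have hzero : ∑ i, (x i - xs i) ⬝ᵥ Sum.elim lam 0 = 0 := by
    have : ∀ i, (x i - xs i) ⬝ᵥ Sum.elim lam 0
        = ∑ a, (x i (Sum.inl a) - xs i (Sum.inl a)) * lam a := by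
      intro i
      simp [dotProduct, Fintype.sum_sum_type]
    simp_rw [this]
    rw [Finset.sum_comm]
    simp_rw [← Finset.sum_mul, hcons]
    simp
  calc ∑ i, xs i ⬝ᵥ (Ci i *ᵥ xs i)
      ≤ ∑ i, (xs i ⬝ᵥ (Ci i *ᵥ xs i) + (x i - xs i) ⬝ᵥ (Ci i *ᵥ (x i - xs i))
          + 2 * ((x i - xs i) ⬝ᵥ Sum.elim lam 0)) := by
        rw [Finset.sum_add_distrib, Finset.sum_add_distrib, ← Finset.mul_sum, hzero, mul_zero,
          add_zero]
        exact le_add_of_nonneg_right (Finset.sum_nonneg fun i _ => hpsd i _)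
    _ = ∑ i, x i ⬝ᵥ (Ci i *ᵥ x i) := by
        exact Finset.sum_congr rfl fun i _ => (expand i).symm

end aux
theorem stmt6 {Ω : Type*} [MeasurableSpace Ω] (μ : Measure Ω) [IsProbabilityMeasure μ]
    (M T : ℕ) (hM : 0 < M)
    (V W : Fin M → Fin (T + 1) → Ω → ℝ)
    (hV : ∀ i t, MemLp (V i t) 2 μ) (hW : ∀ i t, MemLp (W i t) 2 μ)
    (hindep : ∀ i₁ i₂, i₁ ≠ i₂ → ∀ t₁ t₂,
      IndepFun (V i₁ t₁) (V i₂ t₂) μ ∧ IndepFun (W i₁ t₁) (W i₂ t₂) μ ∧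
      IndepFun (V i₁ t₁) (W i₂ t₂) μ)
    (Vt : Fin (T + 1) → ℝ) (hmeanV : ∀ i t, ∫ ω, V i t ω ∂μ = Vt t)
    (hmeanW : ∀ i t, ∫ ω, W i t ω ∂μ = 0)
    (C : Fin M → Matrix (Fin (T + 1) ⊕ Fin (T + 1)) (Fin (T + 1) ⊕ Fin (T + 1)) ℝ)
    (hC : ∀ i a b, C i a b = cov μ (Sum.elim (V i) (W i) a) (Sum.elim (V i) (W i) b))
    (hCinv : ∀ i, IsUnit (C i))
    (H11 H21 : Fin M → Matrix (Fin (T + 1)) (Fin (T + 1)) ℝ)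
    (hH11 : ∀ i, H11 i = ((C i)⁻¹).toBlocks₁₁)
    (hH21 : ∀ i, H21 i = ((C i)⁻¹).toBlocks₂₁)
    (e : Fin (T + 1) → ℝ) (he : e = fun _ => 1)
    (αstar βstar : Fin M → Fin (T + 1) → ℝ)
    (hαstar : ∀ i, αstar i = H11 i *ᵥ ((∑ i', H11 i')⁻¹ *ᵥ e))
    (hβstar : ∀ i, βstar i = H21 i *ᵥ ((∑ i', H11 i')⁻¹ *ᵥ e)) :
    (∀ t, ∑ i, αstar i t = 1) ∧
    ∀ α β : Fin M → Fin (T + 1) → ℝ, (∀ t, ∑ i, α i t = 1) →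
      variance (fun ω => ∑ i, ∑ t, (αstar i t * V i t ω + βstar i t * W i t ω)) μ ≤
      variance (fun ω => ∑ i, ∑ t, (α i t * V i t ω + β i t * W i t ω)) μ := by
  haveI : Nonempty (Fin M) := Fin.pos_iff_nonempty.mp hM
  set lam : Fin (T + 1) → ℝ := (∑ i', H11 i')⁻¹ *ᵥ e with hlam
  have hZ : ∀ i (a : Fin (T + 1) ⊕ Fin (T + 1)), MemLp (Sum.elim (V i) (W i) a) 2 μ := by
    intro i a
    cases a with
    | inl t => exact hV i t
    | inr t => exact hW i t
  -- symmetry of C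
  have hsymmC : ∀ i a b, C i a b = C i b a := fun i a b => by rw [hC, hC, cov_comm]
  -- quadratic form expansion
  have hquadeq : ∀ i (y : Fin (T + 1) ⊕ Fin (T + 1) → ℝ),
      y ⬝ᵥ (C i *ᵥ y) = ∑ a, ∑ b, y a * y b
        * cov μ (Sum.elim (V i) (W i) a) (Sum.elim (V i) (W i) b) := by
    intro i y
    simp only [dotProduct, Matrix.mulVec, Finset.mul_sum]
    refine Finset.sum_congr rfl fun a _ => Finset.sum_congr rfl fun b _ => ?_
    rw [hC]
    ring
  -- positive semidefiniteness of C
  have hpsd : ∀ i (y : Fin (T + 1) ⊕ Fin (T + 1) → ℝ), 0 ≤ y ⬝ᵥ (C i *ᵥ y) := by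
    intro i y
    rw [hquadeq i y, ← variance_sum_mul _ (hZ i) y]
    exact variance_nonneg _ _
  have hherm : ∀ i, (C i).IsHermitian := by
    intro i
    ext a b
    simp only [Matrix.conjTranspose_apply, star_trivial]
    exact hsymmC i b a
  have hCpd : ∀ i, (C i).PosDef := fun i =>
    posDef_of_posSemidef_isUnit (posSemidef_iff_dotProduct_mulVec.mpr ⟨hherm i, fun x => by simpa using hpsd i x⟩) (hCinv i)
  have hH11pd : ∀ i, (H11 i).PosDef := fun i => (hH11 i) ▸ toBlocks₁₁_posDef (hCpd i).inv
  have hsumpd : (∑ i, H11 i).PosDef := by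
    rw [posDef_iff_dotProduct_mulVec]
    constructor
    · ext a b
      simp only [Matrix.conjTranspose_apply, Matrix.sum_apply, star_trivial]
      exact Finset.sum_congr rfl fun i _ => by
        have := (hH11pd i).1.apply b a
        simpa using this.symm
    · intro x hx
      have hsv : (∑ i, H11 i) *ᵥ x = ∑ i, H11 i *ᵥ x := by
        funext a
        simp only [Matrix.mulVec, dotProduct, Matrix.sum_apply, Finset.sum_mul,
          Finset.sum_apply]
        rw [Finset.sum_comm]
      rw [hsv]
      have hdp : star x ⬝ᵥ (∑ i, H11 i *ᵥ x) = ∑ i, star x ⬝ᵥ (H11 i *ᵥ x) := by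
        simp only [dotProduct, Finset.sum_apply, Finset.mul_sum]
        rw [Finset.sum_comm]
      rw [hdp]
      exact Finset.sum_pos (fun i _ => (hH11pd i).dotProduct_mulVec_pos hx) Finset.univ_nonempty
  have hsumdet : IsUnit (∑ i, H11 i).det := (Matrix.isUnit_iff_isUnit_det _).mp hsumpd.isUnit
  -- part 1
  have part1 : ∀ t, ∑ i, αstar i t = 1 := by
    intro t
    have h1 : ∑ i, αstar i t = ((∑ i, H11 i) *ᵥ lam) t := by
      simp_rw [hαstar]
      simp only [Matrix.mulVec, dotProduct, Matrix.sum_apply, Finset.sum_mul]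
      rw [Finset.sum_comm]
    rw [h1, hlam, Matrix.mulVec_mulVec, Matrix.mul_nonsing_inv _ hsumdet, Matrix.one_mulVec, he]
  refine ⟨part1, ?_⟩
  -- variance formula
  have hvar2 : ∀ (α β : Fin M → Fin (T + 1) → ℝ),
      variance (fun ω => ∑ i, ∑ t, (α i t * V i t ω + β i t * W i t ω)) μ
        = ∑ i, (Sum.elim (α i) (β i)) ⬝ᵥ (C i *ᵥ (Sum.elim (α i) (β i))) := by
    intro α β
    have hfun : (fun ω => ∑ i, ∑ t, (α i t * V i t ω + β i t * W i t ω))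
        = fun ω => ∑ p : Fin M × (Fin (T + 1) ⊕ Fin (T + 1)),
            (Sum.elim (α p.1) (β p.1) p.2) * Sum.elim (V p.1) (W p.1) p.2 ω := by
      funext ω
      rw [Fintype.sum_prod_type]
      refine Finset.sum_congr rfl fun i _ => ?_
      rw [Fintype.sum_sum_type]
      simp only [Sum.elim_inl, Sum.elim_inr]
      rw [← Finset.sum_add_distrib]
    rw [hfun, variance_sum_mul (fun p : Fin M × (Fin (T + 1) ⊕ Fin (T + 1)) =>
      Sum.elim (V p.1) (W p.1) p.2) (fun p => hZ p.1 p.2)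
      (fun p => Sum.elim (α p.1) (β p.1) p.2)]
    rw [Fintype.sum_prod_type]
    refine Finset.sum_congr rfl fun i _ => ?_
    have hcov0 : ∀ j, i ≠ j → ∀ (a b : Fin (T + 1) ⊕ Fin (T + 1)),
        cov μ (Sum.elim (V i) (W i) a) (Sum.elim (V j) (W j) b) = 0 := by
      intro j hij a b
      refine cov_eq_zero_of_indepFun (hZ i a) (hZ j b) ?_
      cases a with
      | inl t =>
        cases b with
        | inl s => exact (hindep i j hij t s).1
        | inr s => exact (hindep i j hij t s).2.2
      | inr t =>
        cases b with
        | inl s => exact ((hindep j i (Ne.symm hij) s t).2.2).symm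
        | inr s => exact (hindep i j hij t s).2.1
    have hinner : ∀ a : Fin (T + 1) ⊕ Fin (T + 1),
        (∑ q : Fin M × (Fin (T + 1) ⊕ Fin (T + 1)),
          Sum.elim (α i) (β i) a * Sum.elim (α q.1) (β q.1) q.2
            * cov μ (Sum.elim (V i) (W i) a) (Sum.elim (V q.1) (W q.1) q.2))
        = ∑ b, Sum.elim (α i) (β i) a * Sum.elim (α i) (β i) b
            * cov μ (Sum.elim (V i) (W i) a) (Sum.elim (V i) (W i) b) := by
      intro a
      rw [Fintype.sum_prod_type]
      refine Finset.sum_eq_single i (fun j _ hj => ?_) (fun h => absurd (Finset.mem_univ i) h)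
      refine Finset.sum_eq_zero fun b _ => ?_
      rw [hcov0 j (Ne.symm hj) a b, mul_zero]
    simp_rw [hinner]
    rw [hquadeq]
  intro α β hα
  rw [hvar2 α β, hvar2 αstar βstar]
  refine quad_min C hsymmC hpsd (fun i => Sum.elim (αstar i) (βstar i))
    (fun i => Sum.elim (α i) (β i)) lam ?_ ?_
  · intro i
    have hx : Sum.elim (αstar i) (βstar i)
        = (C i)⁻¹ *ᵥ Sum.elim lam 0 := by
      funext s
      cases s with
      | inl t =>
        simp [hαstar, hH11, Matrix.mulVec, dotProduct, Matrix.toBlocks₁₁,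
          Fintype.sum_sum_type]
      | inr t =>
        simp [hβstar, hH21, Matrix.mulVec, dotProduct, Matrix.toBlocks₂₁,
          Fintype.sum_sum_type]
    show C i *ᵥ Sum.elim (αstar i) (βstar i) = _
    rw [hx, Matrix.mulVec_mulVec,
      Matrix.mul_nonsing_inv _ ((Matrix.isUnit_iff_isUnit_det _).mp (hCinv i)),
      Matrix.one_mulVec]
  · intro a
    simp only [Sum.elim_inl]
    rw [Finset.sum_sub_distrib, hα a, part1 a, sub_self]
end

section
/- Let (X_{j,t})_{j=1..n, t=0..T} and (Y_{j,t})_{j=1..n, t=0..T} be i.i.d. copies (across j) of bounded random vectors (X_t), (Y_t) with μ_{x_t} = E[X_t] ≠ 0 and θ_t = E[Y_t]/μ_{x_t}. Define θ̂_t = (Σ_j Y_{j,t})/(Σ_j X_{j,t}) and the statistic S_n = (1/n) Σ_j (Σ_t (Y_{j,t} − θ̂_t X_{j,t})/((1/n)Σ_k X_{k,t}))². Then S_n converges almost surely to E[(Σ_t (Y_t − θ_t X_t)/μ_{x_t})²]. -/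
open MeasureTheory ProbabilityTheory Filter Topology

lemma slln_comp {Ω : Type*} [MeasurableSpace Ω] (μ : Measure Ω) [IsProbabilityMeasure μ]
    {E : Type*} [MeasurableSpace E]
    (Z : ℕ → Ω → E) (hmeas : ∀ j, Measurable (Z j))
    (hindep : iIndepFun Z μ)
    (hid : ∀ j, IdentDistrib (Z j) (Z 0) μ μ)
    (f : E → ℝ) (hf : Measurable f) (D : ℝ) (hD : ∀ j ω, |f (Z j ω)| ≤ D) :
    ∀ᵐ ω ∂μ, Tendsto (fun n : ℕ => (1 / (n : ℝ)) * ∑ j ∈ Finset.range n, f (Z j ω))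
      atTop (𝓝 (∫ ω, f (Z 0 ω) ∂μ)) := by
  have hint : Integrable (fun ω => f (Z 0 ω)) μ := by
    refine (integrable_const D).mono' ((hf.comp (hmeas 0)).aestronglyMeasurable) ?_
    exact Filter.Eventually.of_forall fun ω => by simpa using hD 0 ω
  have hpind : Pairwise (Function.onFun (IndepFun · · μ) (fun j ω => f (Z j ω))) := by
    intro i j hij
    exact (hindep.indepFun hij).comp hf hf
  have hpid : ∀ i, IdentDistrib (fun ω => f (Z i ω)) (fun ω => f (Z 0 ω)) μ μ :=
    fun i => (hid i).comp hf
  filter_upwards [strong_law_ae_real (fun j ω => f (Z j ω)) hint hpind hpid] with ω hω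
  simpa [div_eq_inv_mul, one_div] using hω

theorem stmt11 {Ω : Type*} [MeasurableSpace Ω] (μ : Measure Ω) [IsProbabilityMeasure μ]
    (T : ℕ)
    (Z : ℕ → Ω → (Fin (T + 1) → ℝ) × (Fin (T + 1) → ℝ))
    (hmeas : ∀ j, Measurable (Z j))
    (hindep : iIndepFun Z μ)
    (hid : ∀ j, IdentDistrib (Z j) (Z 0) μ μ)
    (C : ℝ) (hbound : ∀ j t ω, |(Z j ω).1 t| ≤ C ∧ |(Z j ω).2 t| ≤ C)
    (μx : Fin (T + 1) → ℝ) (hμx : ∀ t, μx t = ∫ ω, (Z 0 ω).1 t ∂μ) (hμx0 : ∀ t, μx t ≠ 0)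
    (θ : Fin (T + 1) → ℝ) (hθ : ∀ t, θ t = (∫ ω, (Z 0 ω).2 t ∂μ) / μx t) :
    ∀ᵐ ω ∂μ, Tendsto (fun n : ℕ =>
        (1 / (n : ℝ)) * ∑ j ∈ Finset.range n,
          (∑ t, ((Z j ω).2 t
              - ((∑ k ∈ Finset.range n, (Z k ω).2 t) / (∑ k ∈ Finset.range n, (Z k ω).1 t))
                * (Z j ω).1 t)
            / ((1 / (n : ℝ)) * ∑ k ∈ Finset.range n, (Z k ω).1 t)) ^ 2)
      atTop (nhds (∫ ω, (∑ t, ((Z 0 ω).2 t - θ t * (Z 0 ω).1 t) / μx t) ^ 2 ∂μ)) := by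
  classical
  -- the bounded function whose empirical mean is the "oracle" statistic
  set M : ℝ := ∑ t : Fin (T + 1), (C + |θ t| * C) / |μx t| with hMdef
  set f0 : (Fin (T + 1) → ℝ) × (Fin (T + 1) → ℝ) → ℝ :=
    fun z => (∑ t, (z.2 t - θ t * z.1 t) / μx t) ^ 2 with hf0def
  have hf0meas : Measurable f0 := by
    rw [hf0def]; fun_prop
  have habs_sum_le : ∀ (j : ℕ) (ω : Ω), |∑ t, ((Z j ω).2 t - θ t * (Z j ω).1 t) / μx t| ≤ M := by
    intro j ω
    refine (Finset.abs_sum_le_sum_abs _ _).trans (Finset.sum_le_sum fun t _ => ?_)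
    rw [abs_div]
    gcongr
    calc |(Z j ω).2 t - θ t * (Z j ω).1 t| ≤ |(Z j ω).2 t| + |θ t * (Z j ω).1 t| :=
          abs_sub _ _
      _ = |(Z j ω).2 t| + |θ t| * |(Z j ω).1 t| := by rw [abs_mul]
      _ ≤ C + |θ t| * C := add_le_add (hbound j t ω).2
          (mul_le_mul_of_nonneg_left (hbound j t ω).1 (abs_nonneg _))
  have hf0bound : ∀ j ω, |f0 (Z j ω)| ≤ M ^ 2 := by
    intro j ω
    have h := habs_sum_le j ω
    simp only [hf0def]
    rw [abs_pow]
    exact pow_le_pow_left₀ (abs_nonneg _) h 2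
  have H0 := slln_comp μ Z hmeas hindep hid f0 hf0meas (M ^ 2) hf0bound
  have HX : ∀ t, ∀ᵐ ω ∂μ, Tendsto
      (fun n : ℕ => (1 / (n : ℝ)) * ∑ k ∈ Finset.range n, (Z k ω).1 t)
      atTop (𝓝 (μx t)) := by
    intro t
    have := slln_comp μ Z hmeas hindep hid (fun z => z.1 t)
      ((measurable_pi_apply t).comp measurable_fst) C (fun j ω => (hbound j t ω).1)
    rw [← hμx t] at this
    exact this
  have HY : ∀ t, ∀ᵐ ω ∂μ, Tendsto
      (fun n : ℕ => (1 / (n : ℝ)) * ∑ k ∈ Finset.range n, (Z k ω).2 t)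
      atTop (𝓝 (∫ ω, (Z 0 ω).2 t ∂μ)) := fun t =>
    slln_comp μ Z hmeas hindep hid (fun z => z.2 t)
      ((measurable_pi_apply t).comp measurable_snd) C (fun j ω => (hbound j t ω).2)
  filter_upwards [H0, ae_all_iff.2 HX, ae_all_iff.2 HY] with ω hT hX hY
  have hC : 0 ≤ C := (abs_nonneg _).trans (hbound 0 0 ω).1
  have hM : 0 ≤ M := Finset.sum_nonneg fun t _ =>
    div_nonneg (add_nonneg hC (mul_nonneg (abs_nonneg _) hC)) (abs_nonneg _)
  -- abbreviations (definitionally equal to goal pieces)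
  set b : ℕ → ℝ := fun j => ∑ t, ((Z j ω).2 t - θ t * (Z j ω).1 t) / μx t with hbdef
  set a : ℕ → ℕ → ℝ := fun n j => ∑ t, ((Z j ω).2 t
      - ((∑ k ∈ Finset.range n, (Z k ω).2 t) / (∑ k ∈ Finset.range n, (Z k ω).1 t))
        * (Z j ω).1 t)
    / ((1 / (n : ℝ)) * ∑ k ∈ Finset.range n, (Z k ω).1 t) with hadef
  set e1 : Fin (T + 1) → ℕ → ℝ := fun t n =>
    1 / ((1 / (n : ℝ)) * ∑ k ∈ Finset.range n, (Z k ω).1 t) - 1 / μx t with he1def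
  set e2 : Fin (T + 1) → ℕ → ℝ := fun t n =>
    (((1 / (n : ℝ)) * ∑ k ∈ Finset.range n, (Z k ω).2 t)
        / ((1 / (n : ℝ)) * ∑ k ∈ Finset.range n, (Z k ω).1 t))
      / ((1 / (n : ℝ)) * ∑ k ∈ Finset.range n, (Z k ω).1 t) - θ t / μx t with he2def
  set eps : ℕ → ℝ := fun n => ∑ t, (C * |e1 t n| + C * |e2 t n|) with hepsdef
  have he1 : ∀ t, Tendsto (e1 t) atTop (𝓝 0) := by
    intro t
    have h := ((hX t).inv₀ (hμx0 t)).sub_const (μx t)⁻¹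
    simpa [he1def, one_div] using h
  have he2 : ∀ t, Tendsto (e2 t) atTop (𝓝 0) := by
    intro t
    have h := (((hY t).div (hX t) (hμx0 t)).div (hX t) (hμx0 t)).sub_const (θ t / μx t)
    have hz : (∫ ω, (Z 0 ω).2 t ∂μ) / μx t / μx t - θ t / μx t = 0 := by
      rw [hθ t]; ring
    rw [hz] at h
    exact h
  have heps : Tendsto eps atTop (𝓝 0) := by
    have h := tendsto_finset_sum (Finset.univ : Finset (Fin (T + 1)))
      (fun t _ => (((he1 t).abs.const_mul C).add ((he2 t).abs.const_mul C)))
    simpa [hepsdef] using h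
  have heps_nonneg : ∀ n, 0 ≤ eps n := fun n => Finset.sum_nonneg fun t _ =>
    add_nonneg (mul_nonneg hC (abs_nonneg _)) (mul_nonneg hC (abs_nonneg _))
  have hbM : ∀ j : ℕ, |b j| ≤ M := fun j => habs_sum_le j ω
  have hab : ∀ n : ℕ, 1 ≤ n → ∀ j : ℕ, |a n j - b j| ≤ eps n := by
    intro n hn j
    have hn0 : (1 / (n : ℝ)) ≠ 0 := one_div_ne_zero (Nat.cast_ne_zero.2 (by omega))
    have key : ∀ t : Fin (T + 1),
        ((Z j ω).2 t
            - ((∑ k ∈ Finset.range n, (Z k ω).2 t) / (∑ k ∈ Finset.range n, (Z k ω).1 t))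
              * (Z j ω).1 t)
          / ((1 / (n : ℝ)) * ∑ k ∈ Finset.range n, (Z k ω).1 t)
          - ((Z j ω).2 t - θ t * (Z j ω).1 t) / μx t
        = (Z j ω).2 t * e1 t n - (Z j ω).1 t * e2 t n := by
      intro t
      have hq : (∑ k ∈ Finset.range n, (Z k ω).2 t) / (∑ k ∈ Finset.range n, (Z k ω).1 t)
          = ((1 / (n : ℝ)) * ∑ k ∈ Finset.range n, (Z k ω).2 t)
            / ((1 / (n : ℝ)) * ∑ k ∈ Finset.range n, (Z k ω).1 t) :=
        (mul_div_mul_left _ _ hn0).symm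
      simp only [he1def, he2def]
      rw [hq]
      ring
    calc |a n j - b j| = |∑ t, (((Z j ω).2 t
            - ((∑ k ∈ Finset.range n, (Z k ω).2 t) / (∑ k ∈ Finset.range n, (Z k ω).1 t))
              * (Z j ω).1 t)
          / ((1 / (n : ℝ)) * ∑ k ∈ Finset.range n, (Z k ω).1 t)
          - ((Z j ω).2 t - θ t * (Z j ω).1 t) / μx t)| := by
          rw [hadef, hbdef, ← Finset.sum_sub_distrib]
      _ ≤ ∑ t, |((Z j ω).2 t
            - ((∑ k ∈ Finset.range n, (Z k ω).2 t) / (∑ k ∈ Finset.range n, (Z k ω).1 t))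
              * (Z j ω).1 t)
          / ((1 / (n : ℝ)) * ∑ k ∈ Finset.range n, (Z k ω).1 t)
          - ((Z j ω).2 t - θ t * (Z j ω).1 t) / μx t| := Finset.abs_sum_le_sum_abs _ _
      _ ≤ eps n := by
          rw [hepsdef]
          refine Finset.sum_le_sum fun t _ => ?_
          rw [key t]
          calc |(Z j ω).2 t * e1 t n - (Z j ω).1 t * e2 t n|
              ≤ |(Z j ω).2 t * e1 t n| + |(Z j ω).1 t * e2 t n| := abs_sub _ _
            _ = |(Z j ω).2 t| * |e1 t n| + |(Z j ω).1 t| * |e2 t n| := by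
                rw [abs_mul, abs_mul]
            _ ≤ C * |e1 t n| + C * |e2 t n| := add_le_add
                (mul_le_mul_of_nonneg_right (hbound j t ω).2 (abs_nonneg _))
                (mul_le_mul_of_nonneg_right (hbound j t ω).1 (abs_nonneg _))
  have hT' : Tendsto (fun n : ℕ => (1 / (n : ℝ)) * ∑ j ∈ Finset.range n, (b j) ^ 2)
      atTop (𝓝 (∫ ω, (∑ t, ((Z 0 ω).2 t - θ t * (Z 0 ω).1 t) / μx t) ^ 2 ∂μ)) := hT
  have hST : ∀ n : ℕ, 1 ≤ n →
      |(1 / (n : ℝ)) * ∑ j ∈ Finset.range n, (a n j) ^ 2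
        - (1 / (n : ℝ)) * ∑ j ∈ Finset.range n, (b j) ^ 2| ≤ eps n * (eps n + 2 * M) := by
    intro n hn
    have hnR : (0 : ℝ) < (n : ℝ) := by exact_mod_cast hn
    have per : ∀ j, |(a n j) ^ 2 - (b j) ^ 2| ≤ eps n * (eps n + 2 * M) := by
      intro j
      have h1 := hab n hn j
      have h2 := hbM j
      have hsq : (a n j) ^ 2 - (b j) ^ 2 = (a n j - b j) * (a n j + b j) := by ring
      rw [hsq, abs_mul]
      have h3 : |a n j + b j| ≤ eps n + 2 * M := by
        have hsplit : a n j + b j = (a n j - b j) + 2 * b j := by ring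
        rw [hsplit]
        calc |(a n j - b j) + 2 * b j| ≤ |a n j - b j| + |2 * b j| := abs_add_le _ _
          _ ≤ eps n + 2 * M := by
              refine add_le_add h1 ?_
              rw [abs_mul, abs_two]
              exact mul_le_mul_of_nonneg_left h2 (by norm_num)
      exact mul_le_mul h1 h3 (abs_nonneg _) (heps_nonneg n)
    calc |(1 / (n : ℝ)) * ∑ j ∈ Finset.range n, (a n j) ^ 2
          - (1 / (n : ℝ)) * ∑ j ∈ Finset.range n, (b j) ^ 2|
        = (1 / (n : ℝ)) * |∑ j ∈ Finset.range n, ((a n j) ^ 2 - (b j) ^ 2)| := by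
          rw [← mul_sub, ← Finset.sum_sub_distrib, abs_mul,
            abs_of_pos (by positivity : (0 : ℝ) < 1 / (n : ℝ))]
      _ ≤ (1 / (n : ℝ)) * ∑ j ∈ Finset.range n, |(a n j) ^ 2 - (b j) ^ 2| := by
          exact mul_le_mul_of_nonneg_left (Finset.abs_sum_le_sum_abs _ _) (by positivity)
      _ ≤ (1 / (n : ℝ)) * ∑ j ∈ Finset.range n, (eps n * (eps n + 2 * M)) := by
          refine mul_le_mul_of_nonneg_left (Finset.sum_le_sum fun j _ => per j) (by positivity)
      _ = eps n * (eps n + 2 * M) := by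
          rw [Finset.sum_const, Finset.card_range, nsmul_eq_mul, ← mul_assoc,
            one_div_mul_cancel (ne_of_gt hnR), one_mul]
  have hg : Tendsto (fun n => eps n * (eps n + 2 * M)) atTop (𝓝 0) := by
    have := heps.mul (heps.add_const (2 * M))
    simpa using this
  have hdiff : Tendsto (fun n : ℕ => (1 / (n : ℝ)) * ∑ j ∈ Finset.range n, (a n j) ^ 2
      - (1 / (n : ℝ)) * ∑ j ∈ Finset.range n, (b j) ^ 2) atTop (𝓝 0) := by
    refine squeeze_zero_norm' ?_ hg
    filter_upwards [eventually_ge_atTop 1] with n hn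
    rw [Real.norm_eq_abs]
    exact hST n hn
  have hfinal := hT'.add hdiff
  rw [add_zero] at hfinal
  have hS : Tendsto (fun n : ℕ => (1 / (n : ℝ)) * ∑ j ∈ Finset.range n, (a n j) ^ 2)
      atTop (𝓝 (∫ ω, (∑ t, ((Z 0 ω).2 t - θ t * (Z 0 ω).1 t) / μx t) ^ 2 ∂μ)) := by
    have heq : ∀ n : ℕ, (1 / (n : ℝ)) * ∑ j ∈ Finset.range n, (b j) ^ 2
        + ((1 / (n : ℝ)) * ∑ j ∈ Finset.range n, (a n j) ^ 2
          - (1 / (n : ℝ)) * ∑ j ∈ Finset.range n, (b j) ^ 2)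
        = (1 / (n : ℝ)) * ∑ j ∈ Finset.range n, (a n j) ^ 2 := fun n => by ring
    simpa only [heq] using hfinal
  exact hS
end
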